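/- Kernel approximation estimate: for 0 < α < 1, h > 0, j ∈ ℤ, and m ≥ 1, one has |(1/Γ(−α)) ∫_{(j+m)h}^{(j+m+1)h} (t − jh)^{−1−α} dt − Λ^α(m)/h^α| ≤ C_α / (h^α m^{2+α}) for a constant C_α depending only on α. -/

import Mathlib

open Real intervalIntegral MeasureTheory Set Filter Topology

/-- The generalized binomial coefficient `(α choose m) = α(α−1)⋯(α−m+1)/m!`. -/
noncomputable def rchoose (α : ℝ) (m : ℕ) : ℝ :=
  (∏ i ∈ Finset.range m, (α - i)) / (m.factorial : ℝ)

/-- The kernel `Λ^α(m) = (−1)^m (α choose m)`. -/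
noncomputable def Lam (α : ℝ) (m : ℕ) : ℝ := (-1) ^ m * rchoose α m

section Aux

variable {α : ℝ}

/-- pointwise lower bound -/
lemma pt_lower (hα : 0 < α) {t : ℝ} (ht : 0 ≤ t) : t ^ α ≤ (Real.exp t - 1) ^ α := by
  have h := Real.add_one_le_exp t
  exact Real.rpow_le_rpow ht (by linarith) hα.le

lemma exp_sub_one_le_mul_exp {t : ℝ} (ht : 0 ≤ t) : Real.exp t - 1 ≤ t * Real.exp t := by
  have h := Real.add_one_le_exp (-t)
  have h2 : (1 - t) * Real.exp t ≤ Real.exp (-t) * Real.exp t :=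
    mul_le_mul_of_nonneg_right (by linarith) (Real.exp_pos t).le
  rw [← Real.exp_add, neg_add_cancel, Real.exp_zero] at h2
  nlinarith

/-- pointwise upper bound -/
lemma pt_upper (hα : 0 < α) (hα1 : α < 1) {t : ℝ} (ht : 0 ≤ t) :
    (Real.exp t - 1) ^ α - t ^ α ≤ α * t ^ (1 + α) * Real.exp (α * t) := by
  have h1 : Real.exp t - 1 ≤ t * Real.exp t := exp_sub_one_le_mul_exp ht
  have h0 : (0:ℝ) ≤ Real.exp t - 1 := by linarith [Real.add_one_le_exp t, ht]
  have h2 : (Real.exp t - 1) ^ α ≤ (t * Real.exp t) ^ α :=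
    Real.rpow_le_rpow h0 h1 hα.le
  have h3 : (t * Real.exp t) ^ α = t ^ α * Real.exp (α * t) := by
    rw [Real.mul_rpow ht (Real.exp_pos t).le, ← Real.exp_mul, mul_comm t α]
  have h4 : Real.exp (α * t) - 1 ≤ (α * t) * Real.exp (α * t) :=
    exp_sub_one_le_mul_exp (by positivity)
  have h5 : t ^ α * (Real.exp (α * t) - 1) ≤ t ^ α * ((α * t) * Real.exp (α * t)) :=
    mul_le_mul_of_nonneg_left h4 (Real.rpow_nonneg ht α)
  have h6 : t ^ α * t = t ^ (1 + α) := by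
    rcases eq_or_lt_of_le ht with h | h
    · simp [← h, Real.zero_rpow (by positivity : (1:ℝ) + α ≠ 0)]
    · rw [Real.rpow_add h, Real.rpow_one]; ring
  calc (Real.exp t - 1) ^ α - t ^ α ≤ t ^ α * Real.exp (α * t) - t ^ α := by
        rw [← h3]; linarith
    _ = t ^ α * (Real.exp (α * t) - 1) := by ring
    _ ≤ t ^ α * ((α * t) * Real.exp (α * t)) := h5
    _ = α * (t ^ α * t) * Real.exp (α * t) := by ring
    _ = α * t ^ (1 + α) * Real.exp (α * t) := by rw [h6]

end Aux

section Int

variable {α : ℝ}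

/-- integrability of `t^β e^{-ct}` on `(0,∞)` -/
lemma integrableOn_rpow_exp {β c : ℝ} (hβ : -1 < β) (hc : 0 < c) :
    IntegrableOn (fun t : ℝ => t ^ β * Real.exp (-(c * t))) (Set.Ioi 0) := by
  have := integrableOn_rpow_mul_exp_neg_mul_rpow (p := 1) hβ one_pos hc
  refine this.congr_fun (fun t ht => ?_) measurableSet_Ioi
  simp only [Real.rpow_one]
  ring_nf

/-- value of `∫ t^β e^{-ct}` on `(0,∞)` -/
lemma integral_rpow_exp {β c : ℝ} (hβ : -1 < β) (hc : 0 < c) :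
    ∫ t in Set.Ioi (0:ℝ), t ^ β * Real.exp (-(c * t)) =
      (1 / c) ^ (β + 1) * Real.Gamma (β + 1) := by
  have := Real.integral_rpow_mul_exp_neg_mul_Ioi (a := β + 1) (r := c) (by linarith) hc
  simpa using this

lemma cont_ker (hα : 0 < α) : Continuous (fun t : ℝ => (Real.exp t - 1) ^ α) := by
  rw [continuous_iff_continuousAt]
  intro x
  exact (Real.continuousAt_rpow_const _ _ (Or.inr hα.le)).comp (by fun_prop)

/-- integrability of the main integrand -/
lemma integrableOn_ker (hα : 0 < α) (hα1 : α < 1) {c : ℝ} (hc : 1 ≤ c) :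
    IntegrableOn (fun t : ℝ => Real.exp (-(c * t)) * (Real.exp t - 1) ^ α) (Set.Ioi 0) := by
  have hcα : 0 < c - α := by linarith
  refine Integrable.mono (integrableOn_rpow_exp (by linarith : (-1:ℝ) < α) hcα)
    ((((Real.continuous_exp.comp (by fun_prop)).mul (cont_ker hα))).aestronglyMeasurable) ?_
  filter_upwards [self_mem_ae_restrict measurableSet_Ioi] with t ht
  have ht' : (0:ℝ) < t := ht
  have h0 : (0:ℝ) ≤ Real.exp t - 1 := by linarith [Real.add_one_le_exp t]
  rw [Real.norm_eq_abs, Real.norm_eq_abs, abs_of_nonneg (by positivity),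
    abs_of_nonneg (by positivity)]
  have h2 : (Real.exp t - 1) ^ α ≤ t ^ α * Real.exp (α * t) := by
    have h := Real.rpow_le_rpow h0 (exp_sub_one_le_mul_exp ht'.le) hα.le
    rwa [Real.mul_rpow ht'.le (Real.exp_pos t).le, ← Real.exp_mul, mul_comm t α] at h
  calc Real.exp (-(c * t)) * (Real.exp t - 1) ^ α
      ≤ Real.exp (-(c * t)) * (t ^ α * Real.exp (α * t)) :=
        mul_le_mul_of_nonneg_left h2 (Real.exp_pos _).le
    _ = t ^ α * (Real.exp (-(c * t)) * Real.exp (α * t)) := by ring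
    _ = t ^ α * Real.exp (-((c - α) * t)) := by
        rw [← Real.exp_add]; congr 1; ring

end Int

/-- the auxiliary integral -/
noncomputable def II (α : ℝ) (m : ℕ) : ℝ :=
  ∫ t in Set.Ioi (0:ℝ), Real.exp (-((m:ℝ) * t)) * (Real.exp t - 1) ^ α

section Estimate

variable {α : ℝ}

lemma II_estimate (hα : 0 < α) (hα1 : α < 1) {m : ℕ} (hm : 1 ≤ m) :
    0 ≤ II α m - Real.Gamma (1 + α) * (m:ℝ) ^ (-(1+α)) ∧
    II α m - Real.Gamma (1 + α) * (m:ℝ) ^ (-(1+α)) ≤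
      α * Real.Gamma (2 + α) * (1 - α) ^ (-(2+α)) * (m:ℝ) ^ (-(2+α)) := by
  have hm0 : (0:ℝ) < m := by exact_mod_cast hm
  have hm1 : (1:ℝ) ≤ (m:ℝ) := by exact_mod_cast hm
  have hmα : 0 < (m:ℝ) - α := by linarith
  -- the comparison integral
  have hA : ∫ t in Set.Ioi (0:ℝ), t ^ α * Real.exp (-((m:ℝ) * t)) =
      Real.Gamma (1 + α) * (m:ℝ) ^ (-(1+α)) := by
    rw [integral_rpow_exp (by linarith) hm0, one_div, Real.inv_rpow hm0.le,
      ← Real.rpow_neg hm0.le]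
    rw [add_comm α 1]; ring
  have hintA : IntegrableOn (fun t : ℝ => t ^ α * Real.exp (-((m:ℝ) * t))) (Set.Ioi 0) :=
    integrableOn_rpow_exp (by linarith) hm0
  have hintI : IntegrableOn (fun t : ℝ => Real.exp (-((m:ℝ) * t)) * (Real.exp t - 1) ^ α)
      (Set.Ioi 0) := integrableOn_ker hα hα1 hm1
  have hintB : IntegrableOn (fun t : ℝ => α * (t ^ (1+α) * Real.exp (-(((m:ℝ) - α) * t))))
      (Set.Ioi 0) := (integrableOn_rpow_exp (by linarith : (-1:ℝ) < 1 + α) hmα).const_mul α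
  have hdiff : II α m - Real.Gamma (1 + α) * (m:ℝ) ^ (-(1+α)) =
      ∫ t in Set.Ioi (0:ℝ),
        (Real.exp (-((m:ℝ) * t)) * (Real.exp t - 1) ^ α - t ^ α * Real.exp (-((m:ℝ) * t))) := by
    rw [integral_sub hintI hintA, II, hA]
  constructor
  · rw [hdiff]
    refine setIntegral_nonneg measurableSet_Ioi (fun t ht => ?_)
    have ht' : (0:ℝ) < t := ht
    have := pt_lower hα ht'.le
    have h := mul_le_mul_of_nonneg_left this (Real.exp_pos (-((m:ℝ)*t))).le
    nlinarith [Real.exp_pos (-((m:ℝ)*t))]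
  · rw [hdiff]
    have hle : ∫ t in Set.Ioi (0:ℝ),
        (Real.exp (-((m:ℝ) * t)) * (Real.exp t - 1) ^ α - t ^ α * Real.exp (-((m:ℝ) * t))) ≤
        ∫ t in Set.Ioi (0:ℝ), α * (t ^ (1+α) * Real.exp (-(((m:ℝ) - α) * t))) := by
      refine setIntegral_mono_on (hintI.sub hintA) hintB measurableSet_Ioi (fun t ht => ?_)
      have ht' : (0:ℝ) < t := ht
      have key := pt_upper hα hα1 ht'.le
      have h := mul_le_mul_of_nonneg_left key (Real.exp_pos (-((m:ℝ)*t))).le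
      calc Real.exp (-((m:ℝ) * t)) * (Real.exp t - 1) ^ α - t ^ α * Real.exp (-((m:ℝ) * t))
          = Real.exp (-((m:ℝ) * t)) * ((Real.exp t - 1) ^ α - t ^ α) := by ring
        _ ≤ Real.exp (-((m:ℝ) * t)) * (α * t ^ (1 + α) * Real.exp (α * t)) := h
        _ = α * (t ^ (1+α) * (Real.exp (-((m:ℝ) * t)) * Real.exp (α * t))) := by ring
        _ = α * (t ^ (1+α) * Real.exp (-(((m:ℝ) - α) * t))) := by
            rw [← Real.exp_add]; congr 3; ring
    refine hle.trans ?_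
    rw [MeasureTheory.integral_const_mul, integral_rpow_exp (by linarith) hmα]
    have e1 : (1:ℝ) + α + 1 = 2 + α := by ring
    rw [e1]
    have hΓ : 0 < Real.Gamma (2 + α) := Real.Gamma_pos_of_pos (by linarith)
    have h1 : (1:ℝ) / ((m:ℝ) - α) ≤ ((1 - α) * (m:ℝ))⁻¹ := by
      rw [one_div]
      refine inv_anti₀ (by nlinarith) (by nlinarith)
    have key : (1 / ((m:ℝ) - α)) ^ ((2:ℝ) + α) ≤ (1 - α) ^ (-(2+α)) * (m:ℝ) ^ (-(2+α)) := by
      have hb : (0:ℝ) ≤ (1 - α) * (m:ℝ) := mul_nonneg (by linarith) hm0.le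
      calc (1 / ((m:ℝ) - α)) ^ ((2:ℝ) + α) ≤ (((1 - α) * (m:ℝ))⁻¹) ^ ((2:ℝ)+α) :=
            Real.rpow_le_rpow (one_div_pos.mpr hmα).le h1 (by linarith)
        _ = (1 - α) ^ (-(2+α)) * (m:ℝ) ^ (-(2+α)) := by
            rw [Real.inv_rpow hb, ← Real.rpow_neg hb,
              Real.mul_rpow (by linarith : (0:ℝ) ≤ 1 - α) hm0.le]
    calc α * ((1 / ((m:ℝ) - α)) ^ ((2:ℝ) + α) * Real.Gamma (2 + α))
        ≤ α * (((1 - α) ^ (-(2+α)) * (m:ℝ) ^ (-(2+α))) * Real.Gamma (2 + α)) := by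
          exact mul_le_mul_of_nonneg_left (mul_le_mul_of_nonneg_right key hΓ.le) hα.le
      _ = α * Real.Gamma (2 + α) * (1 - α) ^ (-(2+α)) * (m:ℝ) ^ (-(2+α)) := by ring

end Estimate

section Rec

variable {α : ℝ}

lemma II_pos (hα : 0 < α) (hα1 : α < 1) {m : ℕ} (hm : 1 ≤ m) : 0 < II α m := by
  have h := (II_estimate hα hα1 hm).1
  have hm0 : (0:ℝ) < m := by exact_mod_cast hm
  have : 0 < Real.Gamma (1 + α) * (m:ℝ) ^ (-(1+α)) := by
    have := Real.Gamma_pos_of_pos (show (0:ℝ) < 1 + α by linarith)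
    positivity
  linarith

lemma II_rec (hα : 0 < α) (hα1 : α < 1) (m : ℕ) (hm : 1 ≤ m) :
    ((m:ℝ) + 1) * II α (m + 1) = ((m:ℝ) - α) * II α m := by
  have hm1 : (1:ℝ) ≤ (m:ℝ) := by exact_mod_cast hm
  set G : ℝ → ℝ := fun t => Real.exp (-(((m:ℝ) + 1) * t)) * (Real.exp t - 1) ^ (α + 1) with hG
  set F : ℝ → ℝ := fun x => Real.exp (-(((m:ℝ) + 1) * x)) *
      ((α + 1) * Real.exp x * (Real.exp x - 1) ^ α -
        ((m:ℝ) + 1) * (Real.exp x - 1) ^ (α + 1)) with hF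
  have hderiv : ∀ x ∈ Set.Ici (0:ℝ), HasDerivAt G (F x) x := by
    intro x _
    have hu : HasDerivAt (fun t : ℝ => Real.exp (-(((m:ℝ) + 1) * t)))
        (Real.exp (-(((m:ℝ) + 1) * x)) * (-((m:ℝ) + 1))) x := by
      have h1 : HasDerivAt (fun t : ℝ => -(((m:ℝ) + 1) * t)) (-(((m:ℝ) + 1) * 1)) x :=
        ((hasDerivAt_id x).const_mul ((m:ℝ) + 1)).neg
      have h2 := h1.exp
      rw [mul_one] at h2
      exact h2
    have hv : HasDerivAt (fun t : ℝ => (Real.exp t - 1) ^ (α + 1))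
        (Real.exp x * (α + 1) * (Real.exp x - 1) ^ α) x := by
      have h2 : HasDerivAt (fun t : ℝ => Real.exp t - 1) (Real.exp x) x :=
        (Real.hasDerivAt_exp x).sub_const 1
      have h3 := h2.rpow_const (p := α + 1) (Or.inr (by linarith))
      simpa using h3
    have := hu.mul hv
    refine this.congr_deriv ?_
    simp only [hF]
    ring
  have hint_m : IntegrableOn (fun t : ℝ => Real.exp (-((m:ℝ) * t)) * (Real.exp t - 1) ^ α)
      (Set.Ioi 0) := integrableOn_ker hα hα1 hm1
  have hint_m1 : IntegrableOn
      (fun t : ℝ => Real.exp (-(((m:ℝ)+1) * t)) * (Real.exp t - 1) ^ α)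
      (Set.Ioi 0) := by
    have := integrableOn_ker hα hα1 (show (1:ℝ) ≤ (m:ℝ)+1 by linarith)
    exact this
  have hFeq : ∀ x ∈ Set.Ioi (0:ℝ), F x =
      (α - (m:ℝ)) * (Real.exp (-((m:ℝ) * x)) * (Real.exp x - 1) ^ α) +
      ((m:ℝ) + 1) * (Real.exp (-(((m:ℝ)+1) * x)) * (Real.exp x - 1) ^ α) := by
    intro x hx
    have hx' : (0:ℝ) < x := hx
    have h0 : (0:ℝ) ≤ Real.exp x - 1 := by linarith [Real.add_one_le_exp x]
    have hsplit : (Real.exp x - 1) ^ (α + 1) = (Real.exp x - 1) ^ α * (Real.exp x - 1) := by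
      rcases eq_or_lt_of_le h0 with h | h
      · rw [← h, Real.zero_rpow (by linarith), mul_zero]
      · rw [Real.rpow_add h, Real.rpow_one]
    have hexp : Real.exp (-(((m:ℝ)+1) * x)) * Real.exp x = Real.exp (-((m:ℝ) * x)) := by
      rw [← Real.exp_add]; congr 1; ring
    simp only [hF, hsplit]
    rw [← hexp]
    ring
  have hFint : IntegrableOn F (Set.Ioi 0) := by
    refine IntegrableOn.congr_fun ?_ (fun x hx => (hFeq x hx).symm) measurableSet_Ioi
    exact (hint_m.const_mul _).add (hint_m1.const_mul _)
  have htend : Tendsto G atTop (𝓝 0) := by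
    have hb1 : ∀ᶠ t in atTop, ‖G t‖ ≤ Real.exp ((α - (m:ℝ)) * t) := by
      filter_upwards [eventually_ge_atTop (0:ℝ)] with t ht
      have h0 : (0:ℝ) ≤ Real.exp t - 1 := by linarith [Real.add_one_le_exp t]
      have hb : (Real.exp t - 1) ^ (α + 1) ≤ (Real.exp t) ^ (α + 1) :=
        Real.rpow_le_rpow h0 (by linarith) (by linarith)
      have he : (Real.exp t) ^ (α + 1) = Real.exp ((α + 1) * t) := by
        rw [← Real.exp_mul, mul_comm]
      rw [Real.norm_eq_abs, abs_of_nonneg (by positivity)]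
      calc Real.exp (-(((m:ℝ) + 1) * t)) * (Real.exp t - 1) ^ (α + 1)
          ≤ Real.exp (-(((m:ℝ) + 1) * t)) * Real.exp ((α + 1) * t) := by
            rw [← he] at *; exact mul_le_mul_of_nonneg_left hb (Real.exp_pos _).le
        _ = Real.exp ((α - (m:ℝ)) * t) := by rw [← Real.exp_add]; congr 1; ring
    have hb2 : Tendsto (fun t : ℝ => Real.exp ((α - (m:ℝ)) * t)) atTop (𝓝 0) := by
      refine Real.tendsto_exp_atBot.comp ?_
      exact (tendsto_const_mul_atBot_of_neg (by linarith)).mpr tendsto_id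
    exact squeeze_zero_norm' hb1 hb2
  have hFTC := MeasureTheory.integral_Ioi_of_hasDerivAt_of_tendsto'
      (f := G) (f' := F) (a := 0) (fun x hx => hderiv x hx) hFint htend
  have hG0 : G 0 = 0 := by
    simp [hG, Real.zero_rpow (show α + 1 ≠ 0 by linarith)]
  rw [hG0, sub_zero] at hFTC
  have hsplit2 : ∫ x in Set.Ioi (0:ℝ), F x =
      (α - (m:ℝ)) * II α m + ((m:ℝ) + 1) * II α (m + 1) := by
    rw [setIntegral_congr_fun measurableSet_Ioi hFeq, integral_add
      (hint_m.const_mul _) (hint_m1.const_mul _), MeasureTheory.integral_const_mul, MeasureTheory.integral_const_mul]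
    rw [II, II]
    push_cast
    ring
  rw [hFTC] at hsplit2
  linarith
end Rec

section LamFacts

variable {α : ℝ}

lemma Lam_eq (α : ℝ) (m : ℕ) :
    Lam α m = (∏ i ∈ Finset.range m, ((i : ℝ) - α)) / (m.factorial : ℝ) := by
  rw [Lam, rchoose, mul_div_assoc']
  congr 1
  rw [show ((-1:ℝ)) ^ m = ∏ _i ∈ Finset.range m, (-1:ℝ) by
    rw [Finset.prod_const, Finset.card_range], ← Finset.prod_mul_distrib]
  exact Finset.prod_congr rfl (fun i _ => by ring)

lemma Lam_succ (α : ℝ) (m : ℕ) :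
    Lam α (m + 1) = Lam α m * (((m:ℝ) - α) / ((m:ℝ) + 1)) := by
  have h1 : ((m:ℝ) + 1) ≠ 0 := by positivity
  have h2 : ((m.factorial : ℝ)) ≠ 0 := by exact_mod_cast (Nat.factorial_pos m).ne'
  rw [Lam_eq, Lam_eq, Finset.prod_range_succ, Nat.factorial_succ]
  push_cast
  rw [div_mul_div_comm, mul_comm ((m:ℝ) + 1) (m.factorial : ℝ)]

lemma Lam_ne_zero (hα : 0 < α) (hα1 : α < 1) (m : ℕ) : Lam α m ≠ 0 := by
  rw [Lam_eq]
  refine div_ne_zero (Finset.prod_ne_zero_iff.mpr (fun i _ => ?_) ) (by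
    exact_mod_cast (Nat.factorial_pos m).ne')
  rcases Nat.eq_zero_or_pos i with h | h
  · simp [h]; linarith
  · have : (1:ℝ) ≤ (i:ℝ) := by exact_mod_cast h
    intro hc
    have : (i:ℝ) = α := by linarith [sub_eq_zero.mp hc]
    linarith [sub_eq_zero.mp hc]

end LamFacts

section Limits

variable {α : ℝ}

lemma Lam_eq_c0_II (hα : 0 < α) (hα1 : α < 1) :
    ∀ m : ℕ, 1 ≤ m → Lam α m = (Lam α 1 / II α 1) * II α m := by
  intro m hm
  induction m with
  | zero => omega
  | succ n ih =>
    rcases Nat.eq_or_lt_of_le hm with h | h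
    · have h1 : n = 0 := by omega
      subst h1
      field_simp [ne_of_gt (II_pos hα hα1 le_rfl)]
    · have hn : 1 ≤ n := by omega
      have hrec := II_rec hα hα1 n hn
      have hn1 : ((n:ℝ) + 1) ≠ 0 := by positivity
      have hII : II α (n + 1) = II α n * (((n:ℝ) - α) / ((n:ℝ) + 1)) := by
        field_simp
        linarith [hrec]
      rw [Lam_succ, ih hn, hII]
      ring

lemma II_mul_rpow_tendsto (hα : 0 < α) (hα1 : α < 1) :
    Tendsto (fun n : ℕ => II α n * (n:ℝ) ^ ((1:ℝ)+α)) atTop (𝓝 (Real.Gamma (1 + α))) := by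
  have key : Tendsto (fun n : ℕ => II α n * (n:ℝ) ^ ((1:ℝ)+α) - Real.Gamma (1 + α))
      atTop (𝓝 0) := by
    refine squeeze_zero_norm'
      (a := fun n : ℕ => (α * Real.Gamma (2 + α) * (1 - α) ^ (-(2+α))) / (n:ℝ)) ?_ ?_
    · filter_upwards [eventually_ge_atTop 1] with n hn
      have hn0 : (0:ℝ) < n := by exact_mod_cast hn
      have hest := II_estimate hα hα1 hn
      have hid : (n:ℝ) ^ (-(1+α)) * (n:ℝ) ^ ((1:ℝ)+α) = 1 := by
        rw [← Real.rpow_add hn0, show -(1+α) + ((1:ℝ)+α) = 0 by ring, Real.rpow_zero]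
      have hid2 : (n:ℝ) ^ (-(2+α)) * (n:ℝ) ^ ((1:ℝ)+α) = (n:ℝ)⁻¹ := by
        rw [← Real.rpow_add hn0, show -(2+α) + ((1:ℝ)+α) = -1 by ring, Real.rpow_neg_one]
      have heq : II α n * (n:ℝ) ^ ((1:ℝ)+α) - Real.Gamma (1 + α) =
          (II α n - Real.Gamma (1 + α) * (n:ℝ) ^ (-(1+α))) * (n:ℝ) ^ ((1:ℝ)+α) := by
        rw [sub_mul, mul_assoc, hid, mul_one]
      rw [Real.norm_eq_abs, heq, abs_mul,
        abs_of_nonneg (Real.rpow_nonneg hn0.le _), abs_of_nonneg hest.1]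
      calc (II α n - Real.Gamma (1 + α) * (n:ℝ) ^ (-(1+α))) * (n:ℝ) ^ ((1:ℝ)+α)
          ≤ (α * Real.Gamma (2 + α) * (1 - α) ^ (-(2+α)) * (n:ℝ) ^ (-(2+α))) *
              (n:ℝ) ^ ((1:ℝ)+α) :=
            mul_le_mul_of_nonneg_right hest.2 (Real.rpow_nonneg hn0.le _)
        _ = (α * Real.Gamma (2 + α) * (1 - α) ^ (-(2+α))) / (n:ℝ) := by
            rw [mul_assoc (α * Real.Gamma (2 + α) * (1 - α) ^ (-(2+α))), hid2,
              div_eq_mul_inv]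
    · exact tendsto_const_div_atTop_nhds_zero_nat _
  have := key.add (tendsto_const_nhds (x := Real.Gamma (1 + α)))
  simpa using this

lemma Lam_mul_rpow_tendsto (hα : 0 < α) (hα1 : α < 1) :
    Tendsto (fun n : ℕ => Lam α n * (n:ℝ) ^ ((1:ℝ)+α)) atTop
      (𝓝 (1 / Real.Gamma (-α))) := by
  have hGS := Real.GammaSeq_tendsto_Gamma (-α)
  -- identity : for n ≥ 1, ((n-α)/n) * GammaSeq (-α) n * (Lam α n * n^(1+α)) = 1
  have hid : ∀ n : ℕ, 1 ≤ n →
      (((n:ℝ) - α) / n) * Real.GammaSeq (-α) n * (Lam α n * (n:ℝ) ^ ((1:ℝ)+α)) = 1 := by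
    intro n hn
    have hn0 : (0:ℝ) < n := by exact_mod_cast hn
    have hfac : (0:ℝ) < (n.factorial : ℝ) := by exact_mod_cast Nat.factorial_pos n
    have hprod : ∏ j ∈ Finset.range (n + 1), (-α + (j:ℝ)) =
        (∏ i ∈ Finset.range n, ((i:ℝ) - α)) * ((n:ℝ) - α) := by
      rw [Finset.prod_range_succ]
      congr 1
      · exact Finset.prod_congr rfl (fun i _ => by ring)
      · ring
    have hL : Lam α n = (∏ i ∈ Finset.range n, ((i : ℝ) - α)) / (n.factorial : ℝ) :=
      Lam_eq α n
    have hLne : Lam α n ≠ 0 := Lam_ne_zero hα hα1 n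
    have hprodne : (∏ i ∈ Finset.range n, ((i:ℝ) - α)) ≠ 0 := by
      intro hc; rw [hL, hc, zero_div] at hLne; exact hLne rfl
    have hGSeq : Real.GammaSeq (-α) n =
        (n:ℝ) ^ (-α:ℝ) * (n.factorial : ℝ) /
          ((∏ i ∈ Finset.range n, ((i:ℝ) - α)) * ((n:ℝ) - α)) := by
      rw [Real.GammaSeq, hprod]
    have hpow : (n:ℝ) ^ (-α:ℝ) * (n:ℝ) ^ ((1:ℝ)+α) = (n:ℝ) := by
      rw [← Real.rpow_add hn0, show -α + ((1:ℝ)+α) = 1 by ring, Real.rpow_one]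
    have hnα : ((n:ℝ) - α) ≠ 0 := by
      have : (1:ℝ) ≤ (n:ℝ) := by exact_mod_cast hn
      intro hc; nlinarith [sub_eq_zero.mp hc]
    rw [hGSeq, hL]
    field_simp
    linear_combination hpow
  set c0 : ℝ := Lam α 1 / II α 1 with hc0
  have ha : Tendsto (fun n : ℕ => Lam α n * (n:ℝ) ^ ((1:ℝ)+α)) atTop
      (𝓝 (c0 * Real.Gamma (1 + α))) := by
    refine Tendsto.congr' ?_ ((II_mul_rpow_tendsto hα hα1).const_mul c0)
    filter_upwards [eventually_ge_atTop 1] with n hn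
    rw [Lam_eq_c0_II hα hα1 n hn]
    ring
  have hfrac : Tendsto (fun n : ℕ => ((n:ℝ) - α) / n) atTop (𝓝 1) := by
    have h := tendsto_const_div_atTop_nhds_zero_nat α
    have h2 := (tendsto_const_nhds (x := (1:ℝ))).sub h
    rw [sub_zero] at h2
    refine Tendsto.congr' ?_ h2
    filter_upwards [eventually_ge_atTop 1] with n hn
    have hn0 : (0:ℝ) < n := by exact_mod_cast hn
    field_simp
  have hb : Tendsto (fun n : ℕ =>
      (((n:ℝ) - α) / n) * Real.GammaSeq (-α) n * (Lam α n * (n:ℝ) ^ ((1:ℝ)+α))) atTop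
      (𝓝 (1 * Real.Gamma (-α) * (c0 * Real.Gamma (1 + α)))) := (hfrac.mul hGS).mul ha
  have hone : (1:ℝ) * Real.Gamma (-α) * (c0 * Real.Gamma (1 + α)) = 1 := by
    refine tendsto_nhds_unique (hb.congr' ?_) tendsto_const_nhds
    filter_upwards [eventually_ge_atTop 1] with n hn
    exact hid n hn
  have hkey : c0 * Real.Gamma (1 + α) = 1 / Real.Gamma (-α) := by
    have hGne : Real.Gamma (-α) ≠ 0 := by
      intro h
      rw [h] at hone
      simp at hone
    rw [one_mul] at hone
    field_simp
    linarith [hone]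
  rw [← hkey]
  exact ha

end Limits

section Final

variable {α : ℝ}

lemma c0_key (hα : 0 < α) (hα1 : α < 1) :
    (Lam α 1 / II α 1) * Real.Gamma (1 + α) = 1 / Real.Gamma (-α) := by
  have ha : Tendsto (fun n : ℕ => Lam α n * (n:ℝ) ^ ((1:ℝ)+α)) atTop
      (𝓝 ((Lam α 1 / II α 1) * Real.Gamma (1 + α))) := by
    refine Tendsto.congr' ?_ ((II_mul_rpow_tendsto hα hα1).const_mul _)
    filter_upwards [eventually_ge_atTop 1] with n hn
    rw [Lam_eq_c0_II hα hα1 n hn]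
    ring
  exact tendsto_nhds_unique ha (Lam_mul_rpow_tendsto hα hα1)

lemma Lam_final (hα : 0 < α) (hα1 : α < 1) {m : ℕ} (hm : 1 ≤ m) :
    |Lam α m - (m:ℝ) ^ (-(1+α)) / Real.Gamma (-α)| ≤
      (|Lam α 1 / II α 1| * (α * Real.Gamma (2+α) * (1-α) ^ (-(2+α)))) *
        (m:ℝ) ^ (-(2+α)) := by
  have heq : Lam α m - (m:ℝ) ^ (-(1+α)) / Real.Gamma (-α) =
      (Lam α 1 / II α 1) * (II α m - Real.Gamma (1 + α) * (m:ℝ) ^ (-(1+α))) := by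
    rw [Lam_eq_c0_II hα hα1 m hm, div_eq_mul_one_div ((m:ℝ) ^ (-(1+α))), ← c0_key hα hα1]
    ring
  have hest := II_estimate hα hα1 hm
  rw [heq, abs_mul, abs_of_nonneg hest.1]
  calc |Lam α 1 / II α 1| * (II α m - Real.Gamma (1 + α) * (m:ℝ) ^ (-(1+α)))
      ≤ |Lam α 1 / II α 1| *
          (α * Real.Gamma (2 + α) * (1 - α) ^ (-(2+α)) * (m:ℝ) ^ (-(2+α))) :=
        mul_le_mul_of_nonneg_left hest.2 (abs_nonneg _)
    _ = (|Lam α 1 / II α 1| * (α * Real.Gamma (2+α) * (1-α) ^ (-(2+α)))) *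
        (m:ℝ) ^ (-(2+α)) := by ring

/-- pointwise tangent-line bound via Bernoulli -/
lemma tangent_bound (hα : 0 < α) {x t : ℝ} (hx : 0 < x) (hxt : x ≤ t) (ht1 : t ≤ x + 1) :
    |t ^ (-(1+α)) - x ^ (-(1+α))| ≤ (1+α) * x ^ (-(2+α)) := by
  have ht0 : 0 < t := lt_of_lt_of_le hx hxt
  have h1 : t ^ (-(1+α)) ≤ x ^ (-(1+α)) :=
    Real.rpow_le_rpow_of_nonpos hx hxt (by linarith)
  rw [abs_sub_comm, abs_of_nonneg (by linarith)]
  -- Bernoulli : (x/t)^(1+α) ≥ 1 - (1+α)*(t-x)/t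
  have hs : -1 ≤ -((t - x)/t) := by
    rw [neg_le, neg_neg, div_le_one ht0]
    linarith
  have hB := one_add_mul_self_le_rpow_one_add hs (p := 1+α) (by linarith)
  have h1s : 1 + -((t - x)/t) = x / t := by field_simp; ring
  rw [h1s] at hB
  have hdiv : (x / t) ^ ((1:ℝ)+α) = x ^ ((1:ℝ)+α) / t ^ ((1:ℝ)+α) :=
    Real.div_rpow hx.le ht0.le _
  -- so t^(-(1+α)) ≥ (1 - (1+α)(t-x)/t) * x^(-(1+α))
  have hxp : (0:ℝ) < x ^ ((1:ℝ)+α) := Real.rpow_pos_of_pos hx _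
  have htp : (0:ℝ) < t ^ ((1:ℝ)+α) := Real.rpow_pos_of_pos ht0 _
  have hneg : x ^ (-(1+α)) = (x ^ ((1:ℝ)+α))⁻¹ := Real.rpow_neg hx.le _
  have hnegt : t ^ (-(1+α)) = (t ^ ((1:ℝ)+α))⁻¹ := Real.rpow_neg ht0.le _
  have hlow : x ^ (-(1+α)) - (1+α) * ((t-x)/t) * x ^ (-(1+α)) ≤ t ^ (-(1+α)) := by
    rw [hdiv] at hB
    rw [hneg, hnegt]
    have h4 : (1 + (1+α) * -((t - x)/t)) * (x ^ ((1:ℝ)+α))⁻¹ ≤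
        (x ^ ((1:ℝ)+α) / t ^ ((1:ℝ)+α)) * (x ^ ((1:ℝ)+α))⁻¹ :=
      mul_le_mul_of_nonneg_right hB (by positivity)
    have h5 : (x ^ ((1:ℝ)+α) / t ^ ((1:ℝ)+α)) * (x ^ ((1:ℝ)+α))⁻¹ = (t ^ ((1:ℝ)+α))⁻¹ := by
      field_simp
      try ring
    have h6 : (x ^ ((1:ℝ)+α))⁻¹ - (1+α) * ((t-x)/t) * (x ^ ((1:ℝ)+α))⁻¹ =
        (1 + (1+α) * -((t - x)/t)) * (x ^ ((1:ℝ)+α))⁻¹ := by ring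
    rw [h6, ← h5]
    exact h4
  -- now (1+α)((t-x)/t) x^{-(1+α)} ≤ (1+α) x^{-(2+α)}
  have hfin : (1+α) * ((t-x)/t) * x ^ (-(1+α)) ≤ (1+α) * x ^ (-(2+α)) := by
    have hxx : x ^ (-(2+α)) = x⁻¹ * x ^ (-(1+α)) := by
      rw [← Real.rpow_neg_one x, ← Real.rpow_add hx]
      congr 1; ring
    rw [hxx]
    have h2 : (t - x)/t ≤ x⁻¹ := by
      rw [div_le_iff₀ ht0]
      have h3 : x⁻¹ * t ≥ x⁻¹ * x := mul_le_mul_of_nonneg_left hxt (by positivity)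
      rw [inv_mul_cancel₀ hx.ne'] at h3
      nlinarith [inv_pos.mpr hx]
    have := mul_le_mul_of_nonneg_right (mul_le_mul_of_nonneg_left h2
      (by linarith : (0:ℝ) ≤ 1+α)) (Real.rpow_nonneg hx.le (-(1+α)))
    linarith [this]
  linarith

lemma partA (hα : 0 < α) (hα1 : α < 1) {x : ℝ} (hx : 1 ≤ x) :
    |(x ^ (-α) - (x+1) ^ (-α)) / α - x ^ (-(1+α))| ≤ (1+α) * x ^ (-(2+α)) := by
  have hx0 : (0:ℝ) < x := lt_of_lt_of_le one_pos hx
  have hcont : ContinuousOn (fun t : ℝ => t ^ (-(1+α))) (Set.uIcc x (x+1)) := by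
    intro t ht
    rw [Set.uIcc_of_le (by linarith)] at ht
    exact (Real.continuousAt_rpow_const t _ (Or.inl (by linarith [ht.1]))).continuousWithinAt
  have hII : IntervalIntegrable (fun t : ℝ => t ^ (-(1+α))) volume x (x+1) :=
    hcont.intervalIntegrable
  have hint : ∫ t in x..(x+1), t ^ (-(1+α)) = (x ^ (-α) - (x+1) ^ (-α)) / α := by
    rw [integral_rpow (Or.inr ⟨by intro hc; rw [neg_eq_iff_eq_neg] at hc; nlinarith, by
      rw [Set.uIcc_of_le (by linarith)]
      intro hc
      exact absurd hc.1 (by linarith)⟩)]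
    rw [show -(1+α) + 1 = -α by ring]
    have hαne : α ≠ 0 := ne_of_gt hα
    rw [div_eq_div_iff (neg_ne_zero.mpr hαne) hαne]
    ring
  have hconst : ∫ _t in x..(x+1), x ^ (-(1+α)) = x ^ (-(1+α)) := by
    rw [intervalIntegral.integral_const]
    simp
  have hsub : (x ^ (-α) - (x+1) ^ (-α)) / α - x ^ (-(1+α)) =
      ∫ t in x..(x+1), (t ^ (-(1+α)) - x ^ (-(1+α))) := by
    rw [intervalIntegral.integral_sub hII intervalIntegrable_const, hint, hconst]
  rw [hsub]
  have hbnd := intervalIntegral.norm_integral_le_of_norm_le_const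
    (C := (1+α) * x ^ (-(2+α))) (f := fun t : ℝ => t ^ (-(1+α)) - x ^ (-(1+α)))
    (a := x) (b := x+1) ?_
  · rw [Real.norm_eq_abs] at hbnd
    simpa using hbnd
  · intro t ht
    rw [Set.uIoc_of_le (by linarith)] at ht
    exact tangent_bound hα hx0 ht.1.le ht.2

end Final

/-- Kernel approximation estimate: the integral of the Marchaud kernel over a mesh cell
is approximated by `Λ^α(m)/h^α` with error `C_α/(h^α m^{2+α})`. -/
theorem kernel_approximation (α : ℝ) (hα : 0 < α) (hα1 : α < 1) :
    ∃ C : ℝ, 0 < C ∧ ∀ h : ℝ, 0 < h → ∀ j : ℤ, ∀ m : ℕ, 1 ≤ m →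
      |(1 / Real.Gamma (-α)) *
          (∫ t in ((j : ℝ) + m) * h..((j : ℝ) + m + 1) * h, (t - j * h) ^ (-(1 + α))) -
        Lam α m / h ^ α| ≤ C / (h ^ α * (m : ℝ) ^ (2 + α)) := by
  have hG : Real.Gamma (-α) ≠ 0 := by
    refine Real.Gamma_ne_zero (fun k => ?_)
    rcases Nat.eq_zero_or_pos k with hk | hk
    · subst hk; simp; intro hc; linarith [hc]
    · have : (1:ℝ) ≤ (k:ℝ) := by exact_mod_cast hk
      intro hc
      rw [neg_eq_iff_eq_neg] at hc
      nlinarith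
  set C2 : ℝ := |Lam α 1 / II α 1| * (α * Real.Gamma (2+α) * (1-α) ^ (-(2+α))) with hC2
  have hC2nn : 0 ≤ C2 := by
    have h1 : 0 < Real.Gamma (2+α) := Real.Gamma_pos_of_pos (by linarith)
    have h2 : (0:ℝ) ≤ (1-α) ^ (-(2+α)) := Real.rpow_nonneg (by linarith) _
    positivity
  set C' : ℝ := (1+α) / |Real.Gamma (-α)| + C2 with hC'
  refine ⟨C' + 1, by positivity, ?_⟩
  intro h hh j m hm
  have hm0 : (0:ℝ) < m := by exact_mod_cast hm
  have hm1 : (1:ℝ) ≤ (m:ℝ) := by exact_mod_cast hm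
  have hαne : α ≠ 0 := ne_of_gt hα
  -- Step 1 : compute the integral
  have hshift := intervalIntegral.integral_comp_sub_right
    (a := ((j:ℝ)+m)*h) (b := ((j:ℝ)+m+1)*h) (fun t : ℝ => t ^ (-(1+α))) ((j:ℝ)*h)
  rw [show ((j:ℝ)+m)*h - (j:ℝ)*h = (m:ℝ)*h by ring,
      show ((j:ℝ)+m+1)*h - (j:ℝ)*h = ((m:ℝ)+1)*h by ring] at hshift
  have hmh : 0 < (m:ℝ)*h := by positivity
  have hm1h : 0 < ((m:ℝ)+1)*h := by positivity
  have hval : ∫ t in ((m:ℝ)*h)..(((m:ℝ)+1)*h), t ^ (-(1+α)) =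
      ((((m:ℝ)+1)*h) ^ (-α) - ((m:ℝ)*h) ^ (-α)) / (-α) := by
    rw [integral_rpow (Or.inr ⟨by intro hc; rw [neg_eq_iff_eq_neg] at hc; nlinarith, by
      rw [Set.uIcc_of_le (by nlinarith)]
      intro hc
      exact absurd hc.1 (by nlinarith)⟩)]
    rw [show -(1+α) + 1 = -α by ring]
  have hIntegral : (∫ t in ((j:ℝ)+m)*h..((j:ℝ)+m+1)*h, (t - (j:ℝ)*h) ^ (-(1+α))) =
      ((((m:ℝ)+1)*h) ^ (-α) - ((m:ℝ)*h) ^ (-α)) / (-α) := by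
    rw [hshift, hval]
  -- Step 2 : split powers
  have hmul1 : (((m:ℝ)+1)*h) ^ (-α) = ((m:ℝ)+1) ^ (-α) * h ^ (-α) :=
    Real.mul_rpow (by positivity) hh.le
  have hmul2 : ((m:ℝ)*h) ^ (-α) = (m:ℝ) ^ (-α) * h ^ (-α) :=
    Real.mul_rpow hm0.le hh.le
  set X : ℝ := (1 / Real.Gamma (-α)) * (((m:ℝ) ^ (-α) - ((m:ℝ)+1) ^ (-α)) / α) - Lam α m
    with hX
  have hhα : h ^ (-α) = (h ^ α)⁻¹ := Real.rpow_neg hh.le α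
  have hsplit : (1 / Real.Gamma (-α)) *
      (((((m:ℝ)+1)*h) ^ (-α) - ((m:ℝ)*h) ^ (-α)) / (-α)) - Lam α m / h ^ α =
      X * h ^ (-α) := by
    rw [hmul1, hmul2, hhα, hX]
    field_simp
    ring
  rw [hIntegral, hsplit, abs_mul, abs_of_nonneg (le_of_lt (by positivity : (0:ℝ) < h ^ (-α)))]
  -- Step 3 : bound |X|
  have hXbound : |X| ≤ C' * (m:ℝ) ^ (-(2+α)) := by
    have hA := partA hα hα1 hm1
    have hB := Lam_final hα hα1 hm
    have hdecomp : X = (1 / Real.Gamma (-α)) *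
        ((((m:ℝ) ^ (-α) - ((m:ℝ)+1) ^ (-α)) / α) - (m:ℝ) ^ (-(1+α))) +
        ((m:ℝ) ^ (-(1+α)) / Real.Gamma (-α) - Lam α m) := by
      rw [hX]; field_simp; ring
    rw [hdecomp]
    refine (abs_add_le _ _).trans ?_
    rw [abs_mul, abs_sub_comm ((m:ℝ) ^ (-(1+α)) / Real.Gamma (-α)) _] at *
    rw [hC']
    have h1 : |1 / Real.Gamma (-α)| = 1 / |Real.Gamma (-α)| := by
      rw [abs_div, abs_one]
    rw [h1]
    have hGpos : 0 < |Real.Gamma (-α)| := abs_pos.mpr hG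
    calc 1 / |Real.Gamma (-α)| *
          |(((m:ℝ) ^ (-α) - ((m:ℝ)+1) ^ (-α)) / α) - (m:ℝ) ^ (-(1+α))| +
          |Lam α m - (m:ℝ) ^ (-(1+α)) / Real.Gamma (-α)|
        ≤ 1 / |Real.Gamma (-α)| * ((1+α) * (m:ℝ) ^ (-(2+α))) + C2 * (m:ℝ) ^ (-(2+α)) := by
          gcongr
      _ = ((1+α) / |Real.Gamma (-α)| + C2) * (m:ℝ) ^ (-(2+α)) := by ring
  calc |X| * h ^ (-α) ≤ (C' * (m:ℝ) ^ (-(2+α))) * h ^ (-α) :=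
        mul_le_mul_of_nonneg_right hXbound (le_of_lt (by positivity))
    _ ≤ ((C' + 1) * (m:ℝ) ^ (-(2+α))) * h ^ (-α) := by
        have : (0:ℝ) < (m:ℝ) ^ (-(2+α)) := by positivity
        have : (0:ℝ) < h ^ (-α) := by positivity
        nlinarith
    _ = (C' + 1) / (h ^ α * (m:ℝ) ^ (2+α)) := by
        rw [Real.rpow_neg hm0.le, hhα, div_eq_mul_inv, mul_inv]
        ring
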